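/- For any positive integers m, n and any i ∈ {1,…,m}: (a) for every i-element subset X of I_n, the number of sets C ∈ C_{m,n} with C∩I_n = X equals f_{m,n}^i (i.e., this count is independent of the choice of the i-element subset X of the last column); and (b) |C_{m,n}| = Σ_{i=1}^{m} C(m,i)·f_{m,n}^i, where C(m,i) is the binomial coefficient. -/

import Mathlib

open SimpleGraph Finset
open scoped Classical

/-- A connected set of a graph: a nonempty vertex subset inducing a connected subgraph. -/
def IsConnSet {V : Type*} (G : SimpleGraph V) (C : Finset V) : Prop :=
  C.Nonempty ∧ (G.induce (C : Set V)).Connected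

/-- `N(G)`: the number of connected sets of `G`. -/
noncomputable def numConnSets {V : Type*} (G : SimpleGraph V) : ℕ :=
  {C : Finset V | IsConnSet G C}.ncard

/-- The cycle `C_m` on `Fin m`, labelled as in the paper: `i` is adjacent to `i'` iff
`|i − i'| = 1` or `{i, i'} = {first, last}` (0-indexed: `{0, m−1}`). -/
def cycleRow (m : ℕ) : SimpleGraph (Fin m) :=
  SimpleGraph.fromRel (fun i i' => i'.1 = i.1 + 1 ∨ (i.1 = 0 ∧ i'.1 = m - 1))

/-- `C_{m,n}`: the connected sets of `K_m×P_n` containing at least one vertex of each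
column. -/
def Cmn (m n : ℕ) : Set (Finset (Fin m × Fin n)) :=
  {C | IsConnSet ((⊤ : SimpleGraph (Fin m)) □ pathGraph n) C ∧
       ∀ j : Fin n, (C.filter (fun p => p.2 = j)).Nonempty}

/-- `C'_{m,n}`: the vertex subsets that are connected sets of `K_m×P_n` but not
connected sets of `C_m×P_n` and contain at least one vertex of each column. -/
def Cmn' (m n : ℕ) : Set (Finset (Fin m × Fin n)) :=
  {C | IsConnSet ((⊤ : SimpleGraph (Fin m)) □ pathGraph n) C ∧
       ¬ IsConnSet (cycleRow m □ pathGraph n) C ∧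
       ∀ j : Fin n, (C.filter (fun p => p.2 = j)).Nonempty}

/-- `N(K_m×P_n; X)`: the number of `C ∈ C_{m,n}` with `C∩I_j = X∩I_j` for every
column `I_j` with `X∩I_j ≠ ∅`. -/
noncomputable def Ncount (m n : ℕ) (X : Finset (Fin m × Fin n)) : ℕ :=
  {C | C ∈ Cmn m n ∧ ∀ j : Fin n,
      (X.filter (fun p => p.2 = j)).Nonempty →
      C.filter (fun p => p.2 = j) = X.filter (fun p => p.2 = j)}.ncard

/-- `N'(K_m×P_n; X)`: the number of `C ∈ C'_{m,n}` with `C∩I_j = X∩I_j` for every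
column `I_j` with `X∩I_j ≠ ∅`. -/
noncomputable def N' (m n : ℕ) (X : Finset (Fin m × Fin n)) : ℕ :=
  {C | C ∈ Cmn' m n ∧ ∀ j : Fin n,
      (X.filter (fun p => p.2 = j)).Nonempty →
      C.filter (fun p => p.2 = j) = X.filter (fun p => p.2 = j)}.ncard

/-- `f_{m,n}^i`: the number of sets in `C_{m,n}` whose intersection with the last column
equals the fixed `i`-element set `{v_{1,n},…,v_{i,n}}`. -/
noncomputable def fval (m n : ℕ) (hn : 0 < n) (i : ℕ) : ℕ :=
  {C : Finset (Fin m × Fin n) | C ∈ Cmn m n ∧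
    C.filter (fun p => p.2 = (⟨n - 1, by omega⟩ : Fin n)) =
      (Finset.univ.filter (fun q : Fin m => q.1 < i)).image
        (fun q => (q, (⟨n - 1, by omega⟩ : Fin n)))}.ncard

/-- `R` is (the vertex set of) a connected component of the subgraph of `H` induced by
`S`: `R` is a nonempty subset of `S`, `H[R]` is connected, and there is no edge of `H`
between `R` and `S \ R`. -/
def IsCompOf {W : Type*} (H : SimpleGraph W) (R S : Finset W) : Prop :=
  R ⊆ S ∧ R.Nonempty ∧ (H.induce (R : Set W)).Connected ∧
  ∀ x ∈ R, ∀ y ∈ S, y ∉ R → ¬ H.Adj x y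

/-- `k(H[S])`: the number of connected components of the subgraph of `H` induced by `S`. -/
noncomputable def kcomp {W : Type*} (H : SimpleGraph W) (S : Finset W) : ℕ :=
  Nat.card (H.induce (S : Set W)).ConnectedComponent

namespace Stmt8

variable {m n : ℕ}

def fmap (σ : Equiv.Perm (Fin m)) (n : ℕ) : (Fin m × Fin n) → (Fin m × Fin n) :=
  fun p => (σ p.1, p.2)

lemma fmap_inj (σ : Equiv.Perm (Fin m)) : Function.Injective (fmap σ n) := by
  intro a b h
  simpa [fmap, Prod.ext_iff, σ.injective.eq_iff] using h

lemma fmap_comp (σ τ : Equiv.Perm (Fin m)) (p : Fin m × Fin n) :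
    fmap σ n (fmap τ n p) = fmap (σ * τ) n p := rfl

def pe (σ : Equiv.Perm (Fin m)) (n : ℕ) : (Fin m × Fin n) ≃ (Fin m × Fin n) :=
  σ.prodCongr (Equiv.refl _)

lemma pe_eq_fmap (σ : Equiv.Perm (Fin m)) : ⇑(pe σ n) = fmap σ n := rfl

lemma pe_adj (σ : Equiv.Perm (Fin m)) (a b : Fin m × Fin n) :
    ((⊤ : SimpleGraph (Fin m)) □ pathGraph n).Adj (pe σ n a) (pe σ n b) ↔
    ((⊤ : SimpleGraph (Fin m)) □ pathGraph n).Adj a b := by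
  simp [pe, SimpleGraph.boxProd_adj, EmbeddingLike.apply_eq_iff_eq, σ.injective.ne_iff]

lemma connected_image (σ : Equiv.Perm (Fin m)) (C : Finset (Fin m × Fin n)) :
    (((⊤ : SimpleGraph (Fin m)) □ pathGraph n).induce
        ((C.image (fmap σ n) : Finset _) : Set _)).Connected ↔
    (((⊤ : SimpleGraph (Fin m)) □ pathGraph n).induce (C : Set _)).Connected := by
  have hset : ((C.image (fmap σ n) : Finset _) : Set (Fin m × Fin n))
      = (pe σ n) '' (C : Set _) := by
    rw [Finset.coe_image, pe_eq_fmap]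
  rw [hset]
  refine (SimpleGraph.Iso.connected_iff ?_).symm
  exact { toEquiv := Equiv.image (pe σ n) (C : Set _),
          map_rel_iff' := by
            intro a b
            simp only [SimpleGraph.comap_adj, Function.Embedding.coe_subtype,
              Equiv.image, Equiv.coe_fn_mk]
            exact pe_adj σ a.1 b.1 }


lemma filter_image (σ : Equiv.Perm (Fin m)) (C : Finset (Fin m × Fin n)) (j : Fin n) :
    (C.image (fmap σ n)).filter (fun p => p.2 = j)
      = (C.filter (fun p => p.2 = j)).image (fmap σ n) := by
  ext p
  simp only [Finset.mem_filter, Finset.mem_image, fmap]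
  constructor
  · rintro ⟨⟨q, hq, rfl⟩, h2⟩
    exact ⟨q, ⟨hq, h2⟩, rfl⟩
  · rintro ⟨q, ⟨hq, h2⟩, rfl⟩
    exact ⟨⟨q, hq, rfl⟩, h2⟩

lemma mem_Cmn_image (σ : Equiv.Perm (Fin m)) {C : Finset (Fin m × Fin n)}
    (hC : C ∈ Cmn m n) : C.image (fmap σ n) ∈ Cmn m n := by
  obtain ⟨⟨hne, hconn⟩, hcol⟩ := hC
  refine ⟨⟨hne.image _, (connected_image σ C).mpr hconn⟩, fun j => ?_⟩
  rw [filter_image]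
  exact (hcol j).image _

lemma image_fmap_inv (σ : Equiv.Perm (Fin m)) (C : Finset (Fin m × Fin n)) :
    (C.image (fmap σ⁻¹ n)).image (fmap σ n) = C := by
  rw [Finset.image_image]
  have : fmap σ n ∘ fmap σ⁻¹ n = id := by
    funext p; simp [fmap]
  rw [this, Finset.image_id]

lemma image_col (σ : Equiv.Perm (Fin m)) (X : Finset (Fin m)) (t : Fin n) :
    (X.image (fun q => (q, t))).image (fmap σ n) = (X.image ⇑σ).image (fun q => (q, t)) := by
  rw [Finset.image_image, Finset.image_image]; rfl

lemma card_filter_lt {i m : ℕ} (him : i ≤ m) :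
    (Finset.univ.filter (fun q : Fin m => q.1 < i)).card = i := by
  have h : Finset.univ.filter (fun q : Fin m => q.1 < i)
      = (Finset.univ : Finset (Fin i)).map (Fin.castLEEmb him) := by
    ext q
    simp only [Finset.mem_filter, Finset.mem_univ, true_and, Finset.mem_map,
      Fin.coe_castLEEmb]
    constructor
    · intro hq; exact ⟨⟨q.1, hq⟩, Fin.ext rfl⟩
    · rintro ⟨a, rfl⟩; exact a.2
  rw [h, Finset.card_map, Finset.card_univ, Fintype.card_fin]

lemma ncard_S_eq (X Y : Finset (Fin m)) (hcard : X.card = Y.card) (t : Fin n) :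
    {C : Finset (Fin m × Fin n) | C ∈ Cmn m n ∧
      C.filter (fun p => p.2 = t) = X.image (fun q => (q, t))}.ncard
    = {C : Finset (Fin m × Fin n) | C ∈ Cmn m n ∧
      C.filter (fun p => p.2 = t) = Y.image (fun q => (q, t))}.ncard := by
  classical
  let e := Finset.equivOfCardEq hcard
  let σ : Equiv.Perm (Fin m) := e.extendSubtype
  have himg : X.image ⇑σ = Y := by
    apply Finset.eq_of_subset_of_card_le
    · intro y hy
      obtain ⟨x, hx, rfl⟩ := Finset.mem_image.1 hy
      exact e.extendSubtype_mem x hx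
    · exact le_of_eq (by rw [Finset.card_image_of_injective _ σ.injective, hcard])
  have hYX : Y.image ⇑σ⁻¹ = X := by
    rw [← himg, Finset.image_image]
    have hid : ⇑σ⁻¹ ∘ ⇑σ = id := by funext x; simp
    rw [hid, Finset.image_id]
  have key : {C : Finset (Fin m × Fin n) | C ∈ Cmn m n ∧
      C.filter (fun p => p.2 = t) = Y.image (fun q => (q, t))}
      = (fun C : Finset (Fin m × Fin n) => C.image (fmap σ n)) ''
        {C : Finset (Fin m × Fin n) | C ∈ Cmn m n ∧
          C.filter (fun p => p.2 = t) = X.image (fun q => (q, t))} := by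
    ext D
    constructor
    · rintro ⟨hD, hfil⟩
      refine ⟨D.image (fmap σ⁻¹ n), ⟨mem_Cmn_image _ hD, ?_⟩, image_fmap_inv σ D⟩
      rw [filter_image, hfil, image_col, hYX]
    · rintro ⟨C, ⟨hC, hfil⟩, rfl⟩
      exact ⟨mem_Cmn_image σ hC, by rw [filter_image, hfil, image_col, himg]⟩
  rw [key, Set.ncard_image_of_injective _ (Finset.image_injective (fmap_inj σ))]

end Stmt8

/-- (a) For every `i`-element subset `X` of the last column of
`K_m×P_n`, the number of `C ∈ C_{m,n}` with `C∩I_n = X` equals `f_{m,n}^i`; and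
(b) `|C_{m,n}| = Σ_{i=1}^{m} C(m,i)·f_{m,n}^i`. -/
theorem statement8 (m n i : ℕ) (hm : 0 < m) (hn : 0 < n) (hi : 1 ≤ i) (him : i ≤ m) :
    (∀ X : Finset (Fin m), X.card = i →
      {C : Finset (Fin m × Fin n) | C ∈ Cmn m n ∧
        C.filter (fun p => p.2 = (⟨n - 1, by omega⟩ : Fin n)) =
          X.image (fun q => (q, (⟨n - 1, by omega⟩ : Fin n)))}.ncard = fval m n hn i) ∧
    (Cmn m n).ncard = ∑ j ∈ Finset.Icc 1 m, Nat.choose m j * fval m n hn j := by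
  constructor
  · intro X hX
    have h := Stmt8.ncard_S_eq (n := n) X
      (Finset.univ.filter (fun q : Fin m => q.1 < i))
      (by rw [hX, Stmt8.card_filter_lt him]) ⟨n - 1, by omega⟩
    exact h
  · set t : Fin n := ⟨n - 1, by omega⟩ with ht
    have hfin : (Cmn m n).Finite := Set.toFinite _
    rw [Set.ncard_eq_toFinset_card _ hfin]
    set A := hfin.toFinset with hA
    set g : Finset (Fin m × Fin n) → Finset (Fin m) :=
      fun C => (C.filter (fun p => p.2 = t)).image Prod.fst with hg
    have hmemA : ∀ C, C ∈ A ↔ C ∈ Cmn m n := fun C => hfin.mem_toFinset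
    have hfilg : ∀ C : Finset (Fin m × Fin n),
        C.filter (fun p => p.2 = t) = (g C).image (fun q => (q, t)) := by
      intro C
      ext p
      simp only [hg, Finset.mem_filter, Finset.mem_image]
      constructor
      · rintro ⟨hp, h2⟩
        exact ⟨p.1, ⟨p, ⟨hp, h2⟩, rfl⟩, by rw [← h2]⟩
      · rintro ⟨q, ⟨p', ⟨hp', h2'⟩, rfl⟩, rfl⟩
        have hpp : p' = (p'.1, t) := by rw [← h2']
        exact ⟨hpp ▸ hp', rfl⟩
    have step1 : A.card = ∑ X ∈ (Finset.univ : Finset (Finset (Fin m))),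
        (A.filter (fun C => g C = X)).card :=
      Finset.card_eq_sum_card_fiberwise (fun C _ => Finset.mem_univ _)
    have step2 : ∑ X ∈ (Finset.univ : Finset (Finset (Fin m))),
        (A.filter (fun C => g C = X)).card
        = ∑ j ∈ Finset.range (m + 1),
            ∑ X ∈ Finset.univ.filter (fun X : Finset (Fin m) => X.card = j),
              (A.filter (fun C => g C = X)).card := by
      refine (Finset.sum_fiberwise_of_maps_to (fun X _ => ?_) _).symm
      have := Finset.card_le_univ X
      simp only [Finset.card_univ, Fintype.card_fin] at this
      simp only [Finset.mem_range]
      omega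
    have hzero : ∑ X ∈ Finset.univ.filter (fun X : Finset (Fin m) => X.card = 0),
        (A.filter (fun C => g C = X)).card = 0 := by
      apply Finset.sum_eq_zero
      intro X hX
      have hXe : X = ∅ := Finset.card_eq_zero.1 (Finset.mem_filter.1 hX).2
      rw [Finset.card_eq_zero]
      rw [Finset.filter_eq_empty_iff]
      intro C hC
      have hCmn : C ∈ Cmn m n := (hmemA C).1 hC
      have hne : (g C).Nonempty := (hCmn.2 t).image _
      rw [hXe]
      exact fun h => (Finset.nonempty_iff_ne_empty.1 hne) h
    have hmain : ∀ j ∈ Finset.Icc 1 m,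
        (∑ X ∈ Finset.univ.filter (fun X : Finset (Fin m) => X.card = j),
          (A.filter (fun C => g C = X)).card) = Nat.choose m j * fval m n hn j := by
      intro j hj
      obtain ⟨hj1, hjm⟩ := Finset.mem_Icc.1 hj
      have hXval : ∀ X : Finset (Fin m), X.card = j →
          (A.filter (fun C => g C = X)).card = fval m n hn j := by
        intro X hXc
        have hset : (A.filter (fun C => g C = X))
            = (Set.toFinite {C : Finset (Fin m × Fin n) | C ∈ Cmn m n ∧
                C.filter (fun p => p.2 = t) = X.image (fun q => (q, t))}).toFinset := by
          ext C
          simp only [Finset.mem_filter, Set.Finite.mem_toFinset, Set.mem_setOf_eq, hmemA]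
          constructor
          · rintro ⟨hC, rfl⟩
            exact ⟨hC, hfilg C⟩
          · rintro ⟨hC, hfil⟩
            refine ⟨hC, ?_⟩
            show (C.filter (fun p => p.2 = t)).image Prod.fst = X
            rw [hfil, Finset.image_image]
            have : (Prod.fst ∘ fun q : Fin m => (q, t)) = id := rfl
            rw [this, Finset.image_id]
        rw [hset, ← Set.ncard_eq_toFinset_card]
        have h := Stmt8.ncard_S_eq (n := n) X
          (Finset.univ.filter (fun q : Fin m => q.1 < j))
          (by rw [hXc, Stmt8.card_filter_lt hjm]) t
        rw [h, ht]
        rfl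
      rw [Finset.sum_congr rfl
        (fun X hX => hXval X (Finset.mem_filter.1 hX).2)]
      rw [Finset.sum_const, smul_eq_mul]
      congr 1
      have hpc : (Finset.univ.filter (fun X : Finset (Fin m) => X.card = j))
          = Finset.powersetCard j (Finset.univ : Finset (Fin m)) := by
        ext X
        simp [Finset.mem_powersetCard]
      rw [hpc, Finset.card_powersetCard, Finset.card_univ, Fintype.card_fin]
    have hrange : Finset.range (m + 1) = insert 0 (Finset.Icc 1 m) := by
      ext k
      simp only [Finset.mem_range, Finset.mem_insert, Finset.mem_Icc]
      omega
    rw [step1, step2, hrange, Finset.sum_insert (by simp), hzero, zero_add]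
    exact Finset.sum_congr rfl hmain
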